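/- Let G be a finite connected simple undirected graph on vertex set V and let S ⊆ V be a perfect critical set with |S| = k. Then for every vertex v ∈ V∖S, the number of neighbors of v inside S satisfies |N_S(v)| ≠ 1 and |N_S(v)| ≠ k − 1. -/

import Mathlib

open Matrix

/-- `S` is a perfect critical set of `G`: `S` is nonempty and some Laplacian eigenvector
vanishes at every vertex outside `S` and is nonzero at every vertex of `S`. -/
def IsPerfectCriticalSet {V : Type*} [Fintype V] [DecidableEq V]
    (G : SimpleGraph V) [DecidableRel G.Adj] (S : Finset V) : Prop :=
  S.Nonempty ∧ ∃ (y : V → ℝ) (l : ℝ), y ≠ 0 ∧ G.lapMatrix ℝ *ᵥ y = l • y ∧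
    (∀ v ∉ S, y v = 0) ∧ ∀ v ∈ S, y v ≠ 0

/-- **Lemma 1.** If `S` is a perfect critical `k`-set of a connected graph `G`, then every
vertex outside `S` has a number of neighbors in `S` different from `1` and from `k − 1`. -/
theorem stmt_5 {V : Type*} [Fintype V] [DecidableEq V] (G : SimpleGraph V) [DecidableRel G.Adj]
    (hconn : G.Connected) (S : Finset V) (k : ℕ) (hk : S.card = k)
    (hS : IsPerfectCriticalSet G S) :
    ∀ v ∉ S, (S.filter (fun u => G.Adj v u)).card ≠ 1 ∧
      (S.filter (fun u => G.Adj v u)).card ≠ k - 1 := by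
  obtain ⟨hne, y, l, hy0, heig, hout, hin⟩ := hS
  intro v hv
  -- key identity: the sum of y over neighbors of v in S is 0
  have hfilt : S.filter (fun u => G.Adj v u) ⊆ G.neighborFinset v := by
    intro u hu
    simp only [Finset.mem_filter] at hu
    simpa using hu.2
  have hsum0 : ∑ u ∈ S.filter (fun u => G.Adj v u), y u = 0 := by
    have h1 : (G.lapMatrix ℝ *ᵥ y) v = 0 := by
      rw [heig]; simp [hout v hv]
    rw [SimpleGraph.lapMatrix_mulVec_apply, hout v hv] at h1
    have h2 : ∑ u ∈ G.neighborFinset v, y u = 0 := by linarith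
    rw [← h2]
    refine Finset.sum_subset hfilt ?_
    intro u hu hnu
    apply hout
    intro huS
    exact hnu (Finset.mem_filter.mpr ⟨huS, by simpa using hu⟩)
  -- l ≠ 0
  have hl : l ≠ 0 := by
    intro hl0
    have hker : Matrix.toLin' (G.lapMatrix ℝ) y = 0 := by
      rw [Matrix.toLin'_apply, heig, hl0, zero_smul]
    rw [Matrix.toLin'_apply, G.lapMatrix_mulVec_eq_zero_iff_forall_reachable] at hker
    obtain ⟨u, hu⟩ := hne
    exact hin u hu ((hker u v (hconn.preconnected u v)).trans (hout v hv))
  -- total sum of y is 0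
  have htot : ∑ u ∈ S, y u = 0 := by
    have hsum : ∑ u, (G.lapMatrix ℝ *ᵥ y) u = 0 := by
      have h1 : (fun _ => (1:ℝ)) ⬝ᵥ (G.lapMatrix ℝ *ᵥ y) = 0 := by
        rw [dotProduct_mulVec, ← Matrix.mulVec_transpose,
          (G.isSymm_lapMatrix (R := ℝ)).eq, G.lapMatrix_mulVec_const_eq_zero]
        simp
      simpa [dotProduct] using h1
    rw [heig] at hsum
    simp only [Pi.smul_apply, smul_eq_mul, ← Finset.mul_sum] at hsum
    have h2 : ∑ u, y u = 0 := by
      rcases mul_eq_zero.mp hsum with h | h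
      · exact absurd h hl
      · exact h
    calc ∑ u ∈ S, y u = ∑ u, y u :=
          Finset.sum_subset (Finset.subset_univ S) (fun u _ hu => hout u hu)
      _ = 0 := h2
  constructor
  · intro hcard
    obtain ⟨u, hu⟩ := Finset.card_eq_one.mp hcard
    have huS : u ∈ S := (Finset.mem_filter.mp (hu ▸ Finset.mem_singleton_self u)).1
    rw [hu, Finset.sum_singleton] at hsum0
    exact hin u huS hsum0
  · intro hcard
    have hsub : S.filter (fun u => G.Adj v u) ⊆ S := Finset.filter_subset _ _
    have hk1 : 1 ≤ k := hk ▸ Finset.card_pos.mpr hne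
    have hcard1 : (S \ S.filter (fun u => G.Adj v u)).card = 1 := by
      rw [Finset.card_sdiff_of_subset hsub, hk, hcard]
      omega
    obtain ⟨w, hw⟩ := Finset.card_eq_one.mp hcard1
    have hwS : w ∈ S := (Finset.mem_sdiff.mp (hw ▸ Finset.mem_singleton_self w)).1
    have : ∑ u ∈ S \ S.filter (fun u => G.Adj v u), y u = 0 := by
      rw [Finset.sum_sdiff_eq_sub hsub, htot, hsum0, sub_zero]
    rw [hw, Finset.sum_singleton] at this
    exact hin w hwS this
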